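/- Free-flight distance along the separatrix branch W₂ (Proposition C.1): let a > b > 0, c = sqrt(a² − b²), λ = (a+c)/(a−c). Let φ₀ ∈ (0, π), ξ₀ = tan(φ₀/2), and φ₁ = 2 arctan(λ^{−1} ξ₀). Then sqrt( a² (cos φ₀ + cos φ₁)² + b² (sin φ₀ + sin φ₁)² ) = 2a (λ + ξ₀²)² / ( (λ² + ξ₀²)(1 + ξ₀²) ). -/

import Mathlib

lemma cos_two_arctan (x : ℝ) :
    Real.cos (2 * Real.arctan x) = (1 - x ^ 2) / (1 + x ^ 2) := by
  have h : (0:ℝ) < 1 + x ^ 2 := by positivity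
  rw [Real.cos_two_mul, Real.cos_arctan]
  rw [div_pow, one_pow, Real.sq_sqrt h.le]
  field_simp
  ring

lemma sin_two_arctan (x : ℝ) :
    Real.sin (2 * Real.arctan x) = 2 * x / (1 + x ^ 2) := by
  have h : (0:ℝ) < 1 + x ^ 2 := by positivity
  have hs : Real.sqrt (1 + x ^ 2) ^ 2 = 1 + x ^ 2 := Real.sq_sqrt h.le
  have hsne : Real.sqrt (1 + x ^ 2) ≠ 0 := by positivity
  rw [Real.sin_two_mul, Real.sin_arctan, Real.cos_arctan]
  field_simp
  rw [hs]


/-- Proposition C.1: free-flight distance along the separatrix branch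
`W₂`.  With `ξ₀ = tan(φ₀/2)` and `φ₁ = 2 arctan(λ⁻¹ ξ₀)`, the chord length
`sqrt(a²(cos φ₀ + cos φ₁)² + b²(sin φ₀ + sin φ₁)²)` equals
`2a(λ + ξ₀²)² / ((λ² + ξ₀²)(1 + ξ₀²))`. -/
theorem free_flight_distance_W2
    (a b : ℝ) (hb : 0 < b) (hab : b < a)
    (c lam : ℝ) (hc : c = Real.sqrt (a ^ 2 - b ^ 2)) (hlam : lam = (a + c) / (a - c))
    (φ₀ : ℝ) (hφ₀ : φ₀ ∈ Set.Ioo 0 Real.pi)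
    (ξ₀ : ℝ) (hξ₀ : ξ₀ = Real.tan (φ₀ / 2))
    (φ₁ : ℝ) (hφ₁ : φ₁ = 2 * Real.arctan (lam⁻¹ * ξ₀)) :
    Real.sqrt (a ^ 2 * (Real.cos φ₀ + Real.cos φ₁) ^ 2 +
        b ^ 2 * (Real.sin φ₀ + Real.sin φ₁) ^ 2)
      = 2 * a * (lam + ξ₀ ^ 2) ^ 2 / ((lam ^ 2 + ξ₀ ^ 2) * (1 + ξ₀ ^ 2)) := by
  have ha : (0:ℝ) < a := hb.trans hab
  have hsub : (0:ℝ) ≤ a ^ 2 - b ^ 2 := by nlinarith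
  have hc0 : 0 ≤ c := hc ▸ Real.sqrt_nonneg _
  have hc2 : c ^ 2 = a ^ 2 - b ^ 2 := by rw [hc, Real.sq_sqrt hsub]
  have hca : c < a := by nlinarith
  have hcpos : 0 < c := by
    nlinarith [hc2, mul_pos (sub_pos.2 hab) (show (0:ℝ) < a + b by linarith)]
  have hlam1 : 1 < lam := by
    rw [hlam, lt_div_iff₀ (by linarith)]
    linarith
  have hlamne : lam ≠ 0 := by linarith
  -- b^2 in terms of a, lam
  have hb2 : b ^ 2 = 4 * a ^ 2 * lam / (lam + 1) ^ 2 := by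
    have hac : a - c ≠ 0 := by linarith
    rw [hlam]
    field_simp
    rw [eq_div_iff (pow_ne_zero 2 (by intro h; linarith))]
    linear_combination (4 * a ^ 2) * hc2
  -- φ₀ as 2 arctan ξ₀
  have hφ0' : φ₀ = 2 * Real.arctan ξ₀ := by
    rw [hξ₀, Real.arctan_tan (by linarith [hφ₀.1, Real.pi_pos]) (by linarith [hφ₀.2])]
    ring
  have hu : (0:ℝ) < 1 + ξ₀ ^ 2 := by positivity
  have hv : (0:ℝ) < 1 + (lam⁻¹ * ξ₀) ^ 2 := by positivity
  have hw : (0:ℝ) < lam ^ 2 + ξ₀ ^ 2 := by positivity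
  rw [hφ0', hφ₁, cos_two_arctan, cos_two_arctan, sin_two_arctan, sin_two_arctan]
  have key : a ^ 2 * ((1 - ξ₀ ^ 2) / (1 + ξ₀ ^ 2) + (1 - (lam⁻¹ * ξ₀) ^ 2) / (1 + (lam⁻¹ * ξ₀) ^ 2)) ^ 2 +
      b ^ 2 * (2 * ξ₀ / (1 + ξ₀ ^ 2) + 2 * (lam⁻¹ * ξ₀) / (1 + (lam⁻¹ * ξ₀) ^ 2)) ^ 2
      = (2 * a * (lam + ξ₀ ^ 2) ^ 2 / ((lam ^ 2 + ξ₀ ^ 2) * (1 + ξ₀ ^ 2))) ^ 2 := by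
    rw [hb2]
    have h1 : lam + 1 ≠ 0 := by linarith
    field_simp
    ring
  rw [key, Real.sqrt_sq (by positivity)]
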